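/- If n and a are integers with n even, n ≥ 6, a odd, and 3 ≤ a ≤ ⌊n/2⌋, then β_b(C(n;1,a)) = α(C(n;1,a)) = n/2. -/

import Mathlib

/-- The eccentricity of a vertex: maximum distance to any other vertex. -/
noncomputable def eccent {V : Type*} [Fintype V] (G : SimpleGraph V) (v : V) : ℕ :=
  Finset.univ.sup (fun u => G.dist v u)

/-- The diameter of a finite graph: maximum eccentricity. -/
noncomputable def graphDiam {V : Type*} [Fintype V] (G : SimpleGraph V) : ℕ :=
  Finset.univ.sup (fun v => eccent G v)

/-- `f` is an independent broadcast on `G`. -/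
def IsIndepBroadcast {V : Type*} [Fintype V] (G : SimpleGraph V) (f : V → ℕ) : Prop :=
  (∀ v, f v ≤ eccent G v) ∧
  ∀ u v : V, u ≠ v → 0 < f u → 0 < f v → max (f u) (f v) < G.dist u v

/-- The broadcast independence number: maximum cost of an independent broadcast. -/
noncomputable def betaB {V : Type*} [Fintype V] (G : SimpleGraph V) : ℕ :=
  sSup {k | ∃ f : V → ℕ, IsIndepBroadcast G f ∧ ∑ v, f v = k}

/-- The independence number: maximum size of an independent set. -/
noncomputable def alphaNum {V : Type*} [Fintype V] (G : SimpleGraph V) : ℕ :=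
  sSup {k | ∃ s : Finset V, (∀ u ∈ s, ∀ v ∈ s, ¬ G.Adj u v) ∧ s.card = k}

/-- The circulant graph `C(n;1,a)` on vertices `v_0,…,v_{n-1}` with edges
`v_i v_{i+1}` and `v_i v_{i+a}`, indices mod `n`. -/
def circulantGraph (n a : ℕ) : SimpleGraph (Fin n) :=
  SimpleGraph.fromRel (fun i j => (i.val + 1) % n = j.val ∨ (i.val + a) % n = j.val)

open SimpleGraph Finset
open Fin.NatCast Fin.IntCast Fin.CommRing

section Aux

variable {n a : ℕ}

lemma circ_adj_one [NeZero n] (h2 : 2 ≤ n) (x : Fin n) :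
    (circulantGraph n a).Adj x (x + 1) := by
  apply (SimpleGraph.fromRel_adj _ _ _).mpr
  have hx := x.isLt
  have hone : (1 : Fin n).val = 1 := by
    rw [Fin.val_one', Nat.one_mod_eq_one.mpr (by omega)]
  constructor
  · intro hh
    have h2' := congrArg Fin.val hh
    rw [Fin.val_add, hone] at h2'
    rcases Nat.lt_or_ge (x.val + 1) n with hlt | hge
    · rw [Nat.mod_eq_of_lt hlt] at h2'; omega
    · have hxe : x.val = n - 1 := by omega
      rw [hxe] at h2'
      have hz : (n - 1 + 1) % n = 0 := by
        have hh2 : n - 1 + 1 = n := by omega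
        rw [hh2, Nat.mod_self]
      omega
  · left; left
    rw [Fin.val_add, hone]

lemma circ_adj_a [NeZero n] (ha : 0 < a) (han : a < n) (x : Fin n) :
    (circulantGraph n a).Adj x (x + (a : Fin n)) := by
  apply (SimpleGraph.fromRel_adj _ _ _).mpr
  have hv : ((a : Fin n)).val = a := by rw [Fin.val_natCast, Nat.mod_eq_of_lt han]
  constructor
  · intro hh
    have h3 : (a : Fin n) = 0 := (left_eq_add.mp hh)
    have h4 := congrArg Fin.val h3
    rw [hv] at h4
    simp at h4
    omega
  · left; right
    rw [Fin.val_add, hv]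

lemma circ_conn [NeZero n] (h2 : 2 ≤ n) : (circulantGraph n a).Connected := by
  have hreach : ∀ (x : Fin n) (k : ℕ), (circulantGraph n a).Reachable x (x + (k : Fin n)) := by
    intro x k
    induction k with
    | zero => simpa using Reachable.refl x
    | succ m ih =>
      have hc : ((m + 1 : ℕ) : Fin n) = (m : Fin n) + 1 := by push_cast; ring
      rw [hc, ← add_assoc]
      exact ih.trans (circ_adj_one h2 (x + (m : Fin n))).reachable
  constructor
  · intro x y
    have hy : y = x + (((y - x).val : ℕ) : Fin n) := by
      rw [Fin.cast_val_eq_self]; ring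
    rw [hy]
    exact hreach x _

lemma circ_dist_le [NeZero n] (h2 : 2 ≤ n) (ha : 0 < a) (han : a < n)
    (x : Fin n) (s q : ℤ) :
    (circulantGraph n a).dist x (x + ((s + q * a : ℤ) : Fin n)) ≤ s.natAbs + q.natAbs := by
  have hconn : (circulantGraph n a).Connected := circ_conn h2
  have hstep : ∀ (y : Fin n), (circulantGraph n a).dist y (y + 1) ≤ 1 :=
    fun y => (dist_eq_one_iff_adj.mpr (circ_adj_one h2 y)).le
  have hstepa : ∀ (y : Fin n), (circulantGraph n a).dist y (y + (a : Fin n)) ≤ 1 :=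
    fun y => (dist_eq_one_iff_adj.mpr (circ_adj_a ha han y)).le
  have d1 : ∀ (s : ℤ) (y : Fin n), (circulantGraph n a).dist y (y + (s : Fin n)) ≤ s.natAbs := by
    intro s
    induction s using Int.induction_on with
    | zero => intro y; simp
    | succ k ih =>
      intro y
      have hc : (((k : ℤ) + 1 : ℤ) : Fin n) = ((k : ℤ) : Fin n) + 1 := by push_cast; ring
      calc (circulantGraph n a).dist y (y + (((k : ℤ) + 1 : ℤ) : Fin n))
          ≤ (circulantGraph n a).dist y (y + ((k : ℤ) : Fin n)) +
            (circulantGraph n a).dist (y + ((k : ℤ) : Fin n)) (y + (((k : ℤ) + 1 : ℤ) : Fin n)) :=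
            hconn.dist_triangle
        _ ≤ k + 1 := by
            have h3 : y + (((k : ℤ) + 1 : ℤ) : Fin n) = (y + ((k : ℤ) : Fin n)) + 1 := by
              rw [hc]; ring
            rw [h3]
            exact Nat.add_le_add (by simpa using ih y) (hstep _)
        _ ≤ ((k : ℤ) + 1).natAbs := by omega
    | pred k ih =>
      intro y
      have h3 : y + ((-(k : ℤ) - 1 : ℤ) : Fin n) + 1 = y + ((-(k : ℤ) : ℤ) : Fin n) := by
        push_cast; ring
      calc (circulantGraph n a).dist y (y + ((-(k : ℤ) - 1 : ℤ) : Fin n))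
          ≤ (circulantGraph n a).dist y (y + ((-(k : ℤ) : ℤ) : Fin n)) +
            (circulantGraph n a).dist (y + ((-(k : ℤ) : ℤ) : Fin n)) (y + ((-(k : ℤ) - 1 : ℤ) : Fin n)) :=
            hconn.dist_triangle
        _ ≤ k + 1 := by
            refine Nat.add_le_add (by simpa using ih y) ?_
            rw [SimpleGraph.dist_comm, ← h3]
            exact hstep _
        _ ≤ (-(k : ℤ) - 1).natAbs := by omega
  induction q using Int.induction_on with
  | zero => simpa using d1 s x
  | succ k ih =>
    have h3 : x + ((s + ((k : ℤ) + 1) * a : ℤ) : Fin n)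
        = (x + ((s + (k : ℤ) * a : ℤ) : Fin n)) + (a : Fin n) := by
      push_cast; ring
    calc (circulantGraph n a).dist x (x + ((s + ((k : ℤ) + 1) * a : ℤ) : Fin n))
        ≤ (circulantGraph n a).dist x (x + ((s + (k : ℤ) * a : ℤ) : Fin n)) +
          (circulantGraph n a).dist (x + ((s + (k : ℤ) * a : ℤ) : Fin n)) (x + ((s + ((k : ℤ) + 1) * a : ℤ) : Fin n)) :=
          hconn.dist_triangle
      _ ≤ (s.natAbs + k) + 1 := by
          refine Nat.add_le_add (by simpa using ih) ?_
          rw [h3]; exact hstepa _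
      _ ≤ s.natAbs + ((k : ℤ) + 1).natAbs := by omega
  | pred k ih =>
    have h3 : x + ((s + (-(k : ℤ) - 1) * a : ℤ) : Fin n) + (a : Fin n)
        = x + ((s + (-(k : ℤ)) * a : ℤ) : Fin n) := by
      push_cast; ring
    calc (circulantGraph n a).dist x (x + ((s + (-(k : ℤ) - 1) * a : ℤ) : Fin n))
        ≤ (circulantGraph n a).dist x (x + ((s + (-(k : ℤ)) * a : ℤ) : Fin n)) +
          (circulantGraph n a).dist (x + ((s + (-(k : ℤ)) * a : ℤ) : Fin n)) (x + ((s + (-(k : ℤ) - 1) * a : ℤ) : Fin n)) :=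
          hconn.dist_triangle
      _ ≤ (s.natAbs + k) + 1 := by
          refine Nat.add_le_add (by simpa using ih) ?_
          rw [SimpleGraph.dist_comm, ← h3]
          exact hstepa _
      _ ≤ s.natAbs + (-(k : ℤ) - 1).natAbs := by omega

lemma circ_dist_le₀ [NeZero n] (h2 : 2 ≤ n) (ha : 0 < a) (han : a < n)
    (x : Fin n) (s : ℤ) :
    (circulantGraph n a).dist x (x + (s : Fin n)) ≤ s.natAbs := by
  have := circ_dist_le h2 ha han x s 0
  simpa using this

end Aux

section Aux2

variable {n a : ℕ}

lemma fin_repr [NeZero n] (w : Fin n) : ∃ δ : ℤ, w = (δ : Fin n) ∧ δ.natAbs ≤ n / 2 := by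
  have hx := w.isLt
  rcases le_or_gt w.val (n / 2) with h | h
  · refine ⟨(w.val : ℤ), ?_, by omega⟩
    push_cast [Fin.cast_val_eq_self]
    try rfl
  · refine ⟨(w.val : ℤ) - n, ?_, by omega⟩
    push_cast [Fin.cast_val_eq_self, Fin.natCast_self]
    ring

lemma ecc_le_half [NeZero n] (h2 : 2 ≤ n) (ha : 0 < a) (han : a < n) (x : Fin n) :
    _root_.eccent (circulantGraph n a) x ≤ n / 2 := by
  refine Finset.sup_le fun v _ => ?_
  obtain ⟨δ, hδ, hb⟩ := fin_repr (v - x)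
  have hv : v = x + (δ : Fin n) := by rw [← hδ]; ring
  rw [hv]
  exact le_trans (circ_dist_le₀ h2 ha han x δ) hb

lemma one_le_ecc [NeZero n] (h2 : 2 ≤ n) (x : Fin n) :
    1 ≤ _root_.eccent (circulantGraph n a) x := by
  have h := SimpleGraph.dist_eq_one_iff_adj.mpr (circ_adj_one (a := a) h2 x)
  calc 1 = (circulantGraph n a).dist x (x + 1) := h.symm
    _ ≤ _ := Finset.le_sup (Finset.mem_univ (x + 1))

lemma adj_sum_odd [NeZero n] (hne : Even n) (hao : Odd a) {x y : Fin n}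
    (h : (circulantGraph n a).Adj x y) : (x.val + y.val) % 2 = 1 := by
  have h2 : (2 : ℕ) ∣ n := hne.two_dvd
  have hrel := ((SimpleGraph.fromRel_adj _ _ _).mp h).2
  have hao2 : a % 2 = 1 := Nat.odd_iff.mp hao
  have key : ∀ u v : Fin n, ((u.val + 1) % n = v.val ∨ (u.val + a) % n = v.val) →
      (u.val + v.val) % 2 = 1 := by
    intro u v hr
    rcases hr with hr | hr
    · have hm := Nat.mod_mod_of_dvd (u.val + 1) h2
      omega
    · have hm := Nat.mod_mod_of_dvd (u.val + a) h2
      omega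
  rcases hrel with hr | hr
  · exact key x y hr
  · have := key y x hr; omega

lemma two_le_dist [NeZero n] (h2 : 2 ≤ n) {x y : Fin n} (hxy : x ≠ y)
    (hnadj : ¬ (circulantGraph n a).Adj x y) : 2 ≤ (circulantGraph n a).dist x y := by
  have hconn : (circulantGraph n a).Connected := circ_conn h2
  have hpos := hconn.pos_dist_of_ne hxy
  have hne1 : (circulantGraph n a).dist x y ≠ 1 := by
    intro h1
    exact hnadj (SimpleGraph.dist_eq_one_iff_adj.mp h1)
  omega

end Aux2

section Aux3

lemma numF (h t f : ℕ) (hh1 : 1 ≤ h) (ht : h + 1 ≤ t) (hf : f = 2 * t ∨ f = 2 * t + 1)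
    (hexc : ¬(h = 1 ∧ f = 5)) : f ≤ (t - h) * (2 * h + 1) + h := by
  rcases Nat.eq_or_lt_of_le hh1 with h1 | h2
  · rw [← h1]
    have e : (t - 1) * (2 * 1 + 1) = 3 * (t - 1) := by ring
    rw [e]
    omega
  · set u := t - h - 1 with hu
    have e2 : t - h = u + 1 := by omega
    rw [e2]
    have e : (u + 1) * (2 * h + 1) = 2 * u * h + u + 2 * h + 1 := by ring
    rw [e]
    have key : 2 * u * 1 ≤ 2 * u * h := Nat.mul_le_mul_left _ hh1
    omega

lemma decomp (h t a : ℕ) (hh : a = 2 * h + 1) (hth : h < t) (δ : ℤ)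
    (hb : δ.natAbs ≤ (t - h) * a + h) :
    ∃ s q : ℤ, δ = s + q * a ∧ s.natAbs + q.natAbs ≤ t := by
  have hA : (0 : ℤ) < (a : ℤ) := by exact_mod_cast (by omega : 0 < a)
  set N : ℕ := (t - h) * a + h with hN
  set c : ℤ := (t : ℤ) - h with hc
  have hc0 : 0 ≤ c := by simp only [hc]; omega
  have hNc : (N : ℤ) = c * a + h := by
    simp only [hN, hc]
    push_cast [Nat.cast_sub hth.le]
    ring
  set q : ℤ := (δ + h) / a with hq
  set r : ℤ := (δ + h) % a with hr
  have hdm : (a : ℤ) * q + r = δ + h := Int.mul_ediv_add_emod (δ + h) a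
  have hr0 : 0 ≤ r := Int.emod_nonneg _ (by omega)
  have hrlt : r < a := Int.emod_lt_of_pos _ hA
  have haz : (a : ℤ) = 2 * (h : ℤ) + 1 := by exact_mod_cast hh
  have hδub : δ ≤ (N : ℤ) := by omega
  have hδlb : -(N : ℤ) ≤ δ := by omega
  have hq_ub : q < c + 1 := by
    by_contra hcon
    push_neg at hcon
    have h4 : (a : ℤ) * (c + 1) ≤ a * q := mul_le_mul_of_nonneg_left hcon hA.le
    have h3 : (a : ℤ) * q = δ + h - r := by linarith
    have h5 : (a : ℤ) * (c + 1) = c * a + a := by ring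
    linarith
  have hq_lb : -(c + 1) < q := by
    by_contra hcon
    push_neg at hcon
    have h4 : (a : ℤ) * q ≤ a * (-(c + 1)) := mul_le_mul_of_nonneg_left hcon hA.le
    have h3 : (a : ℤ) * q = δ + h - r := by linarith
    have h5 : (a : ℤ) * (-(c + 1)) = -(c * a) - a := by ring
    linarith
  refine ⟨r - h, q, by linarith, ?_⟩
  omega

end Aux3

section Aux4

open Finset

/-- The token set (in offset coordinates) attached to a broadcast vertex of value `f`. -/
noncomputable def Dset (a f : ℕ) : Finset ℤ :=
  if 2 * (f / 2) < a then
    Finset.Icc (-((f / 2 : ℕ) : ℤ)) ((f / 2 : ℕ) : ℤ) ∪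
      (Finset.Icc (-((f - 1 - f / 2 : ℕ) : ℤ)) ((f - 1 - f / 2 : ℕ) : ℤ)).image
        (fun s => (a : ℤ) + s)
  else if a = 3 ∧ f = 5 then Finset.Icc (-4 : ℤ) 4 ∪ {6}
  else Finset.Icc (-(f : ℤ)) ((f : ℤ) - 1)

lemma Dset_diff_lt (n a f : ℕ) (hf : 1 ≤ f) (ha3 : 3 ≤ a) (hfn : f ≤ n / 2)
    (han : a ≤ n / 2) (h35 : a = 3 ∧ f = 5 → 11 ≤ n) :
    ∀ δ₁ ∈ Dset a f, ∀ δ₂ ∈ Dset a f, (δ₁ - δ₂).natAbs < n := by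
  intro δ₁ h₁ δ₂ h₂
  unfold Dset at h₁ h₂
  split_ifs at h₁ h₂ with hc1 hc2
  · simp only [Finset.mem_union, Finset.mem_Icc, Finset.mem_image] at h₁ h₂
    have hmt : (f - 1 - f / 2) ≤ f / 2 := by omega
    rcases h₁ with h₁ | ⟨s₁, hs₁, he₁⟩ <;> rcases h₂ with h₂ | ⟨s₂, hs₂, he₂⟩ <;>
      omega
  · have hn11 := h35 hc2
    simp only [Finset.mem_union, Finset.mem_Icc, Finset.mem_singleton] at h₁ h₂
    rcases h₁ with h₁ | h₁ <;> rcases h₂ with h₂ | h₂ <;> omega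
  · simp only [Finset.mem_Icc] at h₁ h₂
    omega

lemma Dset_card (a f : ℕ) (hf : 1 ≤ f) (ha3 : 3 ≤ a) : (Dset a f).card = 2 * f := by
  unfold Dset
  split_ifs with hc1 hc2
  · rw [Finset.card_union_of_disjoint]
    · rw [Finset.card_image_of_injective _ (add_right_injective (a : ℤ)),
        Int.card_Icc, Int.card_Icc]
      omega
    · rw [Finset.disjoint_left]
      intro x hx hx'
      simp only [Finset.mem_Icc] at hx
      simp only [Finset.mem_image, Finset.mem_Icc] at hx'
      obtain ⟨s, hs, he⟩ := hx'
      omega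
  · rw [Finset.card_union_of_disjoint]
    · rw [Int.card_Icc, Finset.card_singleton, hc2.2]
      omega
    · rw [Finset.disjoint_left]
      intro x hx hx'
      simp only [Finset.mem_Icc] at hx
      simp only [Finset.mem_singleton] at hx'
      omega
  · rw [Int.card_Icc]
    omega

lemma Dset_cert (a f : ℕ) (hf : 1 ≤ f) (ha3 : 3 ≤ a) (hao : Odd a) :
    ∀ δ ∈ Dset a f,
      (∃ s q : ℤ, δ = s + q * a ∧ s.natAbs + q.natAbs ≤ f / 2) ∨
      (∃ s : ℤ, s.natAbs ≤ f - 1 - f / 2 ∧ δ = (a : ℤ) + s) := by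
  intro δ hδ
  unfold Dset at hδ
  split_ifs at hδ with hc1 hc2
  · simp only [Finset.mem_union, Finset.mem_Icc, Finset.mem_image] at hδ
    rcases hδ with h | ⟨s, hs, he⟩
    · exact Or.inl ⟨δ, 0, by ring, by omega⟩
    · exact Or.inr ⟨s, by omega, he.symm⟩
  · have ha' : (a : ℤ) = 3 := by exact_mod_cast hc2.1
    have hf' : f / 2 = 2 := by omega
    rw [hf']
    simp only [Finset.mem_union, Finset.mem_Icc, Finset.mem_singleton] at hδ
    rcases hδ with h | h
    · refine Or.inl ⟨δ - (if (2:ℤ) < δ then 1 else if δ < -2 then -1 else 0) * 3,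
        (if (2:ℤ) < δ then 1 else if δ < -2 then -1 else 0), by rw [ha']; ring, ?_⟩
      split_ifs <;> omega
    · exact Or.inl ⟨0, 2, by rw [h, ha']; ring, by simp⟩
  · obtain ⟨h', hh'⟩ := hao
    have hh'' : a = 2 * h' + 1 := by omega
    have hh1 : 1 ≤ h' := by omega
    have hth : h' < f / 2 := by omega
    simp only [Finset.mem_Icc] at hδ
    have hb : δ.natAbs ≤ (f / 2 - h') * a + h' := by
      have hnum : f ≤ (f / 2 - h') * (2 * h' + 1) + h' :=
        numF h' (f / 2) f hh1 (by omega) (by omega) (by rintro ⟨he1, he5⟩; exact hc2 ⟨by omega, he5⟩)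
      rw [hh'']
      omega
    obtain ⟨s, q, he, hb'⟩ := decomp h' (f / 2) a hh'' hth δ hb
    exact Or.inl ⟨s, q, he, hb'⟩

end Aux4

section Main

open Finset SimpleGraph

variable {n a : ℕ}

lemma main_bound [NeZero n] (hn : 6 ≤ n) (hao : Odd a) (ha3 : 3 ≤ a)
    (han : a ≤ n / 2) (f : Fin n → ℕ)
    (hf : IsIndepBroadcast (circulantGraph n a) f) :
    2 * ∑ v, f v ≤ n := by
  classical
  have h2 : 2 ≤ n := by omega
  have ha0 : 0 < a := by omega
  have haln : a < n := by omega
  have hconn : (circulantGraph n a).Connected := circ_conn h2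
  obtain ⟨hfecc, hfpair⟩ := hf
  have hfhalf : ∀ u, f u ≤ n / 2 := fun u => (hfecc u).trans (ecc_le_half h2 ha0 haln u)
  have h35 : ∀ u : Fin n, a = 3 → f u = 5 → 11 ≤ n := by
    intro u ha3' hf5
    have h5 : 5 ≤ _root_.eccent (circulantGraph n a) u := hf5 ▸ hfecc u
    rw [_root_.eccent] at h5
    obtain ⟨v, -, hv⟩ := Finset.exists_mem_eq_sup Finset.univ ⟨u, Finset.mem_univ u⟩
      (fun w => (circulantGraph n a).dist u w)
    rw [hv] at h5
    obtain ⟨δ, hδ, hb⟩ := fin_repr (v - u)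
    have hveq : v = u + (δ : Fin n) := by rw [← hδ]; ring
    have h3 : (0:ℤ) < 3 := by norm_num
    have hdm := Int.mul_ediv_add_emod (δ + 1) 3
    have hr0 := Int.emod_nonneg (δ + 1) (by norm_num : (3:ℤ) ≠ 0)
    have hrlt := Int.emod_lt_of_pos (δ + 1) h3
    set q : ℤ := (δ + 1) / 3 with hq
    set s : ℤ := δ - q * 3 with hsd
    have he : δ = s + q * (a:ℤ) := by
      rw [hsd, ha3']
      push_cast
      ring
    have hs1 : s.natAbs ≤ 1 := by omega
    have hd : (circulantGraph n a).dist u v ≤ s.natAbs + q.natAbs := by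
      rw [hveq, he]
      exact circ_dist_le h2 ha0 haln u s q
    have hq4 : 4 ≤ q.natAbs := by omega
    omega
  set T : Fin n → Finset (Fin n) :=
    fun u => (Dset a (f u)).image (fun δ : ℤ => u + (δ : Fin n)) with hT
  set S : Finset (Fin n) := Finset.univ.filter (fun u => 0 < f u) with hS
  have hinj : ∀ u : Fin n, 0 < f u → Set.InjOn (fun δ : ℤ => u + (δ : Fin n)) (Dset a (f u)) := by
    intro u hu δ₁ h₁ δ₂ h₂ hEq
    simp only at hEq
    have hc : ((δ₁ - δ₂ : ℤ) : Fin n) = 0 := by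
      push_cast
      rw [add_left_cancel hEq]
      ring
    have hdvd : (n : ℤ) ∣ (δ₁ - δ₂) := (CharP.intCast_eq_zero_iff (Fin n) n _).mp hc
    have hlt : (δ₁ - δ₂).natAbs < n :=
      Dset_diff_lt n a (f u) hu ha3 (hfhalf u) han (fun hc' => h35 u hc'.1 hc'.2) δ₁ h₁ δ₂ h₂
    have hz : δ₁ - δ₂ = 0 :=
      Int.eq_zero_of_dvd_of_natAbs_lt_natAbs hdvd (by simpa using hlt)
    omega
  have hcard : ∀ u : Fin n, 0 < f u → (T u).card = 2 * f u := by
    intro u hu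
    rw [hT]
    simp only
    rw [Finset.card_image_of_injOn (hinj u hu), Dset_card a (f u) hu ha3]
  -- distance certificates for members of T u
  have hdist : ∀ u : Fin n, 0 < f u → ∀ x ∈ T u,
      ((circulantGraph n a).dist u x ≤ f u / 2) ∨
      (∃ s : ℤ, s.natAbs ≤ f u - 1 - f u / 2 ∧ x = u + (((a : ℤ) + s : ℤ) : Fin n)) := by
    intro u hu x hx
    rw [hT] at hx
    simp only [Finset.mem_image] at hx
    obtain ⟨δ, hδD, hδx⟩ := hx
    rcases Dset_cert a (f u) hu ha3 hao δ hδD with ⟨s, q, he, hb⟩ | ⟨s, hb, he⟩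
    · left
      rw [← hδx, he]
      exact le_trans (circ_dist_le h2 ha0 haln u s q) hb
    · right
      exact ⟨s, hb, by rw [← hδx, he]⟩
  -- chord elements also have a distance bound
  have hchord : ∀ (u : Fin n) (s : ℤ),
      (circulantGraph n a).dist u (u + (((a : ℤ) + s : ℤ) : Fin n)) ≤ s.natAbs + 1 := by
    intro u s
    have he : ((a : ℤ) + s : ℤ) = s + 1 * (a : ℤ) := by ring
    rw [he]
    have := circ_dist_le h2 ha0 haln u s 1
    simpa using this
  -- pairwise disjointness
  have hdisj : ∀ u ∈ S, ∀ v ∈ S, u ≠ v → Disjoint (T u) (T v) := by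
    intro u hu v hv huv
    have hu' : 0 < f u := by rw [hS] at hu; simpa using hu
    have hv' : 0 < f v := by rw [hS] at hv; simpa using hv
    rw [Finset.disjoint_left]
    intro x hxu hxv
    have hlt := hfpair u v huv hu' hv'
    have htri : ∀ y : Fin n, (circulantGraph n a).dist u v ≤
        (circulantGraph n a).dist u y + (circulantGraph n a).dist v y := by
      intro y
      rw [SimpleGraph.dist_comm (u := v) (v := y)]
      exact hconn.dist_triangle
    rcases hdist u hu' x hxu with hA | ⟨s₁, hs₁, hx1⟩ <;>
      rcases hdist v hv' x hxv with hB | ⟨s₂, hs₂, hx2⟩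
    · have := htri x
      omega
    · have hd2 : (circulantGraph n a).dist v x ≤ s₂.natAbs + 1 := by rw [hx2]; exact hchord v s₂
      have := htri x
      omega
    · have hd1 : (circulantGraph n a).dist u x ≤ s₁.natAbs + 1 := by rw [hx1]; exact hchord u s₁
      have := htri x
      omega
    · -- both chord-type: the forms force u, v close
      have hveq : v = u + ((s₁ - s₂ : ℤ) : Fin n) := by
        have h9 : u + ((s₁ - s₂ : ℤ) : Fin n) + (((a : ℤ) + s₂ : ℤ) : Fin n)
            = u + (((a : ℤ) + s₁ : ℤ) : Fin n) := by
          push_cast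
          ring
        have h10 : v + (((a : ℤ) + s₂ : ℤ) : Fin n)
            = u + ((s₁ - s₂ : ℤ) : Fin n) + (((a : ℤ) + s₂ : ℤ) : Fin n) := by
          rw [h9, ← hx1, hx2]
        exact add_right_cancel h10
      have hd : (circulantGraph n a).dist u v ≤ (s₁ - s₂).natAbs := by
        rw [hveq]
        exact circ_dist_le₀ h2 ha0 haln u (s₁ - s₂)
      omega
  -- sum up
  have hsum1 : ∑ u ∈ S, 2 * f u ≤ n := by
    calc ∑ u ∈ S, 2 * f u = ∑ u ∈ S, (T u).card := by
          refine Finset.sum_congr rfl fun u hu => ?_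
          have hu' : 0 < f u := by rw [hS] at hu; simpa using hu
          exact (hcard u hu').symm
      _ = (S.biUnion T).card := (Finset.card_biUnion hdisj).symm
      _ ≤ Fintype.card (Fin n) := Finset.card_le_univ _
      _ = n := Fintype.card_fin n
  have hsum2 : ∑ v, f v = ∑ u ∈ S, f u := by
    rw [hS]
    exact (Finset.sum_filter_of_ne (fun x _ hx => by omega)).symm
  rw [hsum2, Finset.mul_sum]
  simpa using hsum1

end Main

section Final

open Finset SimpleGraph

variable {n a : ℕ}

lemma evens_card [NeZero n] :
    ((Finset.univ : Finset (Fin (n / 2))).image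
      (fun i : Fin (n / 2) => (⟨2 * i.val, by have := i.isLt; omega⟩ : Fin n))).card = n / 2 := by
  rw [Finset.card_image_of_injective _ ?_, Finset.card_univ, Fintype.card_fin]
  intro i j hij
  have := congrArg Fin.val hij
  simp only at this
  exact Fin.ext (by omega)

lemma evens_even [NeZero n] (x : Fin n)
    (hx : x ∈ (Finset.univ : Finset (Fin (n / 2))).image
      (fun i : Fin (n / 2) => (⟨2 * i.val, by have := i.isLt; omega⟩ : Fin n))) :
    x.val % 2 = 0 := by
  simp only [Finset.mem_image] at hx
  obtain ⟨i, -, hi⟩ := hx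
  rw [← hi]
  show (2 * i.val) % 2 = 0
  omega

lemma evens_indep [NeZero n] (hne : Even n) (hao : Odd a) (u v : Fin n)
    (hu : u.val % 2 = 0) (hv : v.val % 2 = 0) : ¬ (circulantGraph n a).Adj u v := by
  intro hadj
  have := adj_sum_odd hne hao hadj
  omega

lemma indep_two_card_le [NeZero n] (h2 : 2 ≤ n) (s : Finset (Fin n))
    (hs : ∀ u ∈ s, ∀ v ∈ s, ¬ (circulantGraph n a).Adj u v) : 2 * s.card ≤ n := by
  classical
  have himg : (s.image (fun x => x + 1)).card = s.card :=
    Finset.card_image_of_injective _ (add_left_injective 1)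
  have hdisj : Disjoint s (s.image (fun x => x + 1)) := by
    rw [Finset.disjoint_left]
    intro x hx hx'
    simp only [Finset.mem_image] at hx'
    obtain ⟨y, hy, hyx⟩ := hx'
    have hadj : (circulantGraph n a).Adj y x := by
      rw [← hyx]
      exact circ_adj_one h2 y
    exact hs y hy x hx hadj
  have := Finset.card_union_of_disjoint hdisj
  have hle : (s ∪ s.image (fun x => x + 1)).card ≤ n := by
    calc (s ∪ s.image (fun x => x + 1)).card ≤ Fintype.card (Fin n) := Finset.card_le_univ _
      _ = n := Fintype.card_fin n
  omega

end Final

theorem stmt16 (n a : ℕ) (hne : Even n) (hn : 6 ≤ n) (hao : Odd a)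
    (ha : 3 ≤ a) (han : a ≤ n / 2) :
    betaB (circulantGraph n a) = n / 2 ∧
    alphaNum (circulantGraph n a) = n / 2 := by
  classical
  haveI : NeZero n := ⟨by omega⟩
  have h2 : 2 ≤ n := by omega
  have ha0 : 0 < a := by omega
  have haln : a < n := by omega
  set E : Finset (Fin n) := (Finset.univ : Finset (Fin (n / 2))).image
      (fun i : Fin (n / 2) => (⟨2 * i.val, by have := i.isLt; omega⟩ : Fin n)) with hE
  have hEcard : E.card = n / 2 := evens_card
  have hEindep : ∀ u ∈ E, ∀ v ∈ E, ¬ (circulantGraph n a).Adj u v := by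
    intro u hu v hv
    exact evens_indep hne hao u v (evens_even u hu) (evens_even v hv)
  have hconn : (circulantGraph n a).Connected := circ_conn h2
  -- the even-class broadcast
  set f0 : Fin n → ℕ := fun v => if v ∈ E then 1 else 0 with hf0
  have hf0sum : ∑ v, f0 v = n / 2 := by
    rw [hf0]
    simp only
    rw [Finset.sum_ite_mem, Finset.univ_inter, Finset.sum_const, smul_eq_mul, mul_one, hEcard]
  have hf0broad : IsIndepBroadcast (circulantGraph n a) f0 := by
    constructor
    · intro v
      rw [hf0]
      simp only
      split_ifs
      · exact one_le_ecc h2 v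
      · exact Nat.zero_le _
    · intro u v huv hu hv
      have hu' : u ∈ E := by by_contra hc; rw [hf0] at hu; simp [hc] at hu
      have hv' : v ∈ E := by by_contra hc; rw [hf0] at hv; simp [hc] at hv
      have hge2 : 2 ≤ (circulantGraph n a).dist u v :=
        two_le_dist h2 huv (hEindep u hu' v hv')
      have he1 : f0 u = 1 := by rw [hf0]; simp [hu']
      have he2 : f0 v = 1 := by rw [hf0]; simp [hv']
      rw [he1, he2]
      omega
  -- beta
  have hbeta : betaB (circulantGraph n a) = n / 2 := by
    rw [betaB]
    have hmem : (n / 2) ∈ {k | ∃ f : Fin n → ℕ,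
        IsIndepBroadcast (circulantGraph n a) f ∧ ∑ v, f v = k} :=
      ⟨f0, hf0broad, hf0sum⟩
    have hub : ∀ k ∈ {k | ∃ f : Fin n → ℕ,
        IsIndepBroadcast (circulantGraph n a) f ∧ ∑ v, f v = k}, k ≤ n / 2 := by
      rintro k ⟨g, hg, rfl⟩
      have := main_bound hn hao ha han g hg
      omega
    exact le_antisymm (csSup_le (Set.nonempty_of_mem hmem) hub) (le_csSup ⟨n / 2, hub⟩ hmem)
  refine ⟨hbeta, ?_⟩
  rw [alphaNum]
  have hmem : (n / 2) ∈ {k | ∃ s : Finset (Fin n),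
      (∀ u ∈ s, ∀ v ∈ s, ¬ (circulantGraph n a).Adj u v) ∧ s.card = k} :=
    ⟨E, hEindep, hEcard⟩
  have hub : ∀ k ∈ {k | ∃ s : Finset (Fin n),
      (∀ u ∈ s, ∀ v ∈ s, ¬ (circulantGraph n a).Adj u v) ∧ s.card = k}, k ≤ n / 2 := by
    rintro k ⟨s, hs, rfl⟩
    have := indep_two_card_le h2 s hs
    omega
  exact le_antisymm (csSup_le (Set.nonempty_of_mem hmem) hub) (le_csSup ⟨n / 2, hub⟩ hmem)
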